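/- Let ℓ ≥ 1, let A and B be finite lists of complex numbers and let α_1,…,α_ℓ, β_1,…,β_ℓ be complex numbers, all of whose real parts lie in (−1/4, 1/4), and let X be real with 0 < X < 1. Then ∏_{j=1}^ℓ (1 − X^{1−α_j−β_j}) · C(A ∪ {−β_1,…,−β_ℓ}, B ∪ {−α_1,…,−α_ℓ}) = (−1)^ℓ Σ over all pairs of disjoint subsets J_1, J_2 ⊆ {1,…,ℓ} of (−1)^{|J_1|+|J_2|} · C(A ∪ {−β_j : j ∈ J_1}, B ∪ {−α_j : j ∈ J_2}). -/

import Mathlib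

open scoped BigOperators

/-- The complex power `X ^ w := exp(w · log X)` of a real number `X`. -/
noncomputable def cpowX (X : ℝ) (w : ℂ) : ℂ := Complex.exp (w * (Real.log X : ℂ))

/-- The local divisor coefficient `A(n) = Σ_{n₁+⋯+n_k = n} X^{a₁n₁+⋯+a_k n_k}` attached to a
finite list `A` of complex shifts; it is `0` for negative `n`. -/
noncomputable def locCoeff (X : ℝ) (A : List ℂ) (n : ℤ) : ℂ :=
  if 0 ≤ n then
    ∑ t ∈ Finset.Nat.antidiagonalTuple A.length n.toNat,
      cpowX X (∑ i : Fin A.length, A.get i * (t i : ℂ))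
  else 0

/-- `C(A,B) = Σ_{M ≥ 0} A(M) B(M) X^M`. -/
noncomputable def Ccal (X : ℝ) (A B : List ℂ) : ℂ :=
  ∑' M : ℕ, locCoeff X A (M : ℤ) * locCoeff X B (M : ℤ) * (X : ℂ) ^ (M : ℕ)

/-- The general term of the series `Σ_{A,B,α,β}(M,N)`, indexed by `(q,d,j,k)` with
`q ∈ {0,1}` and `d,j,k ≥ 0`. -/
noncomputable def sigmaTerm (X : ℝ) (A B : List ℂ) (α β : ℂ) (M N : ℕ)
    (x : Fin 2 × ℕ × ℕ × ℕ) : ℂ :=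
  match x with
  | (q, d, j, k) =>
    let qz : ℤ := (q : ℕ)
    let dz : ℤ := d
    let jz : ℤ := j
    let kz : ℤ := k
    (-1 : ℂ) ^ (q : ℕ) * cpowX X ((d : ℂ) * (α + β)) *
      locCoeff X (A.map (· + (-α))) (jz + qz + dz - min (qz + dz) (N : ℤ)) *
      locCoeff X (B.map (· + (-β))) (kz + qz + dz - min (qz + dz) (M : ℤ)) *
      (X : ℂ) ^ (2 * qz + dz + jz + kz - min (qz + dz) (M : ℤ) - min (qz + dz) (N : ℤ))

/-- `Σ_{A,B,α,β}(M,N)`. -/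
noncomputable def sigmaSum (X : ℝ) (A B : List ℂ) (α β : ℂ) (M N : ℕ) : ℂ :=
  ∑' x : Fin 2 × ℕ × ℕ × ℕ, sigmaTerm X A B α β M N x

lemma cpowX_add (X : ℝ) (a b : ℂ) : cpowX X (a + b) = cpowX X a * cpowX X b := by
  simp [cpowX, add_mul, Complex.exp_add]

@[simp] lemma cpowX_zero (X : ℝ) : cpowX X 0 = 1 := by simp [cpowX]

lemma cpowX_one (X : ℝ) (hX : 0 < X) : cpowX X 1 = X := by
  simp [cpowX]
  rw [← Complex.ofReal_exp, Real.exp_log hX]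

lemma norm_cpowX (X : ℝ) (hX : 0 < X) (w : ℂ) : ‖cpowX X w‖ = X ^ w.re := by
  rw [cpowX, Complex.norm_exp]
  congr 1
  rw [Real.rpow_def_of_pos hX]
  simp [mul_comm]

lemma locCoeff_neg (X : ℝ) (A : List ℂ) {n : ℤ} (hn : n < 0) : locCoeff X A n = 0 := by
  rw [locCoeff, if_neg (by omega)]

lemma sum_antidiagonalTuple_succ {M : Type*} [AddCommMonoid M] {k n : ℕ}
    (f : (Fin (k+1) → ℕ) → M) :
    ∑ t ∈ Finset.Nat.antidiagonalTuple (k+1) n, f t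
      = ∑ p ∈ Finset.HasAntidiagonal.antidiagonal n, ∑ t ∈ Finset.Nat.antidiagonalTuple k p.2,
          f (Fin.cons p.1 t) := by
  rw [Finset.sum_sigma']
  apply Finset.sum_nbij' (i := fun t => (⟨(t 0, n - t 0), Fin.tail t⟩ :
      (_ : ℕ × ℕ) × (Fin k → ℕ))) (j := fun x => Fin.cons x.1.1 x.2)
  · intro t ht
    rw [Finset.Nat.mem_antidiagonalTuple] at ht
    have h0 : t 0 ≤ n := by
      rw [← ht]; exact Finset.single_le_sum (f := fun i => t i) (fun i _ => Nat.zero_le _) (Finset.mem_univ 0)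
    simp only [Finset.mem_sigma, Finset.HasAntidiagonal.mem_antidiagonal, Finset.Nat.mem_antidiagonalTuple]
    constructor
    · omega
    · have := Fin.sum_univ_succ t
      rw [ht] at this
      have : ∑ i, Fin.tail t i = n - t 0 := by
        simp only [Fin.tail]
        omega
      exact this
  · intro x hx
    rw [Finset.mem_sigma, Finset.HasAntidiagonal.mem_antidiagonal, Finset.Nat.mem_antidiagonalTuple] at hx
    rw [Finset.Nat.mem_antidiagonalTuple, Fin.sum_cons, hx.2]
    omega
  · intro t ht
    simp [Fin.cons_self_tail]
  · intro x hx
    rw [Finset.mem_sigma, Finset.HasAntidiagonal.mem_antidiagonal, Finset.Nat.mem_antidiagonalTuple] at hx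
    obtain ⟨⟨p1, p2⟩, t⟩ := x
    simp only [Finset.HasAntidiagonal.mem_antidiagonal] at hx
    simp only [Fin.cons_zero, Fin.tail_cons]
    have : n - p1 = p2 := by omega
    rw [this]
  · intro t ht
    simp [Fin.cons_self_tail]

lemma locCoeff_cons (X : ℝ) (a : ℂ) (A : List ℂ) (n : ℕ) :
    locCoeff X (a :: A) (n : ℤ) = ∑ p ∈ Finset.HasAntidiagonal.antidiagonal n,
      cpowX X (a * p.1) * locCoeff X A (p.2 : ℤ) := by
  rw [locCoeff, if_pos (by positivity)]
  simp only [List.length_cons, Int.toNat_natCast]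
  rw [sum_antidiagonalTuple_succ]
  refine Finset.sum_congr rfl fun p hp => ?_
  rw [locCoeff, if_pos (by positivity), Int.toNat_natCast, Finset.mul_sum]
  refine Finset.sum_congr rfl fun t ht => ?_
  rw [← cpowX_add]
  congr 1
  rw [Fin.sum_univ_succ]
  simp [Fin.cons]

lemma locCoeff_zero (X : ℝ) (A : List ℂ) : locCoeff X A 0 = 1 := by
  rw [locCoeff, if_pos le_rfl]
  simp [Finset.Nat.antidiagonalTuple_zero_right]

/-- geometric-type power series attached to a shift -/
noncomputable def geomPS (X : ℝ) (a : ℂ) : PowerSeries ℂ :=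
  PowerSeries.mk fun m => cpowX X (a * m)

lemma locCoeff_eq_coeff (X : ℝ) (A : List ℂ) (n : ℕ) :
    locCoeff X A (n : ℤ) = PowerSeries.coeff n (A.map (geomPS X)).prod := by
  induction A generalizing n with
  | nil =>
    rw [locCoeff, if_pos (by positivity)]
    simp only [List.map_nil, List.prod_nil, Int.toNat_natCast]
    rcases n with _ | m
    · simp [Finset.Nat.antidiagonalTuple_zero_zero]
    · simp [Finset.Nat.antidiagonalTuple_zero_succ, PowerSeries.coeff_one]
  | cons a A ih =>
    rw [locCoeff_cons, List.map_cons, List.prod_cons, PowerSeries.coeff_mul]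
    refine Finset.sum_congr rfl fun p hp => ?_
    rw [ih, geomPS, PowerSeries.coeff_mk]

lemma locCoeff_perm (X : ℝ) {A A' : List ℂ} (h : A.Perm A') (n : ℤ) :
    locCoeff X A n = locCoeff X A' n := by
  rcases lt_or_ge n 0 with hn | hn
  · rw [locCoeff_neg _ _ hn, locCoeff_neg _ _ hn]
  · obtain ⟨m, rfl⟩ : ∃ m : ℕ, n = (m : ℤ) := ⟨n.toNat, (Int.toNat_of_nonneg hn).symm⟩
    rw [locCoeff_eq_coeff, locCoeff_eq_coeff, ((h.map (geomPS X)).prod_eq)]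

lemma locCoeff_rec (X : ℝ) (γ : ℂ) (A : List ℂ) (M : ℕ) :
    locCoeff X (γ :: A) (M : ℤ) =
      locCoeff X A (M : ℤ) + cpowX X γ * locCoeff X (γ :: A) ((M : ℤ) - 1) := by
  rcases M with _ | m
  · simp only [Nat.cast_zero, locCoeff_zero, zero_sub]
    rw [locCoeff_neg _ _ (by norm_num), mul_zero, add_zero]
  · have h1 : ((m + 1 : ℕ) : ℤ) - 1 = (m : ℤ) := by push_cast; ring
    rw [h1, locCoeff_cons, locCoeff_cons, Finset.Nat.antidiagonal_succ, Finset.sum_cons]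
    simp only [Nat.cast_zero, mul_zero, cpowX_zero, one_mul, Finset.sum_map,
      Function.Embedding.coeFn_mk, Prod.map_apply, id_eq]
    rw [Finset.mul_sum]
    congr 1
    refine Finset.sum_congr rfl ?_
    rintro ⟨i, j⟩ hp
    show cpowX X (γ * ((i + 1 : ℕ) : ℂ)) * locCoeff X A ((j : ℕ) : ℤ) = _
    rw [show (γ * ((i + 1 : ℕ) : ℂ)) = γ + γ * (i : ℂ) by push_cast; ring, cpowX_add,
      mul_assoc]

lemma card_antidiagonalTuple_le (k n : ℕ) :
    (Finset.Nat.antidiagonalTuple k n).card ≤ (n + 1) ^ k := by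
  calc (Finset.Nat.antidiagonalTuple k n).card
      ≤ (Fintype.piFinset fun _ : Fin k => Finset.range (n + 1)).card := by
        apply Finset.card_le_card
        intro t ht
        rw [Finset.Nat.mem_antidiagonalTuple] at ht
        rw [Fintype.mem_piFinset]
        intro i
        rw [Finset.mem_range]
        have : t i ≤ n := by
          rw [← ht]
          exact Finset.single_le_sum (f := fun i => t i) (fun i _ => Nat.zero_le _)
            (Finset.mem_univ i)
        omega
    _ = (n + 1) ^ k := by simp [Fintype.card_fin]

lemma norm_locCoeff_le (X : ℝ) (hX0 : 0 < X) (hX1 : X < 1) (A : List ℂ)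
    (hA : ∀ a ∈ A, -(1/4 : ℝ) < a.re) (n : ℕ) :
    ‖locCoeff X A (n : ℤ)‖ ≤ ((n : ℝ) + 1) ^ A.length * X ^ (-(n : ℝ)/4) := by
  rw [locCoeff, if_pos (by positivity), Int.toNat_natCast]
  calc ‖∑ t ∈ Finset.Nat.antidiagonalTuple A.length n,
        cpowX X (∑ i : Fin A.length, A.get i * (t i : ℂ))‖
      ≤ ∑ t ∈ Finset.Nat.antidiagonalTuple A.length n,
        ‖cpowX X (∑ i : Fin A.length, A.get i * (t i : ℂ))‖ := norm_sum_le _ _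
    _ ≤ ∑ _t ∈ Finset.Nat.antidiagonalTuple A.length n, X ^ (-(n : ℝ)/4) := by
        apply Finset.sum_le_sum
        intro t ht
        rw [norm_cpowX X hX0]
        apply Real.rpow_le_rpow_of_exponent_ge hX0 hX1.le
        rw [Finset.Nat.mem_antidiagonalTuple] at ht
        have : (∑ i : Fin A.length, A.get i * (t i : ℂ)).re
            = ∑ i : Fin A.length, (A.get i).re * (t i : ℝ) := by
          rw [Complex.re_sum]
          refine Finset.sum_congr rfl fun i _ => ?_
          simp [Complex.mul_re]
        rw [this]
        have hsum : -(n : ℝ)/4 = ∑ i : Fin A.length, (-(1/4 : ℝ)) * (t i : ℝ) := by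
          rw [← Finset.mul_sum]
          rw [show ∑ i : Fin A.length, ((t i : ℝ)) = ((∑ i, t i : ℕ) : ℝ) by push_cast; rfl]
          rw [ht]; ring
        rw [hsum]
        apply Finset.sum_le_sum
        intro i _
        apply mul_le_mul_of_nonneg_right _ (by positivity)
        exact (hA _ (A.get_mem i)).le
    _ ≤ ((n : ℝ) + 1) ^ A.length * X ^ (-(n : ℝ)/4) := by
        rw [Finset.sum_const, nsmul_eq_mul]
        apply mul_le_mul_of_nonneg_right _ (by positivity)
        calc ((Finset.Nat.antidiagonalTuple A.length n).card : ℝ)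
            ≤ (((n + 1) ^ A.length : ℕ) : ℝ) := by
              exact_mod_cast card_antidiagonalTuple_le A.length n
          _ = ((n : ℝ) + 1) ^ A.length := by push_cast; ring

lemma summable_CcalTerm (X : ℝ) (hX0 : 0 < X) (hX1 : X < 1) (A B : List ℂ)
    (hA : ∀ a ∈ A, -(1/4 : ℝ) < a.re) (hB : ∀ b ∈ B, -(1/4 : ℝ) < b.re) :
    Summable (fun M : ℕ => locCoeff X A (M : ℤ) * locCoeff X B (M : ℤ) * (X : ℂ) ^ M) := by
  set r : ℝ := X ^ ((1:ℝ)/2) with hr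
  have hr0 : 0 < r := Real.rpow_pos_of_pos hX0 _
  have hr1 : r < 1 := Real.rpow_lt_one hX0.le hX1 (by norm_num)
  set K := A.length + B.length with hK
  have h1 : Summable (fun n : ℕ => ((n : ℝ)) ^ K * r ^ n) :=
    summable_pow_mul_geometric_of_norm_lt_one K (by rw [Real.norm_eq_abs, abs_of_pos hr0]; exact hr1)
  have h2 : Summable (fun n : ℕ => (((n+1 : ℕ)) : ℝ) ^ K * r ^ (n+1)) :=
    h1.comp_injective Nat.succ_injective
  have h3 : Summable (fun n : ℕ => ((n : ℝ) + 1) ^ K * r ^ n) := by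
    have := h2.mul_left r⁻¹
    apply this.congr
    intro n
    push_cast
    field_simp
    ring
  refine Summable.of_norm_bounded h3 ?_
  intro n
  rw [norm_mul, norm_mul]
  have hXn : ‖(X : ℂ) ^ n‖ = X ^ ((n : ℝ)) := by
    rw [norm_pow, Complex.norm_real, Real.norm_eq_abs, abs_of_pos hX0, ← Real.rpow_natCast]
  calc ‖locCoeff X A (n : ℤ)‖ * ‖locCoeff X B (n : ℤ)‖ * ‖(X : ℂ) ^ n‖
      ≤ (((n : ℝ) + 1) ^ A.length * X ^ (-(n : ℝ)/4)) *
        (((n : ℝ) + 1) ^ B.length * X ^ (-(n : ℝ)/4)) * X ^ ((n : ℝ)) := by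
        rw [hXn]
        apply mul_le_mul_of_nonneg_right _ (by positivity)
        exact mul_le_mul (norm_locCoeff_le X hX0 hX1 A hA n)
          (norm_locCoeff_le X hX0 hX1 B hB n) (norm_nonneg _) (by positivity)
    _ = ((n : ℝ) + 1) ^ K * r ^ n := by
        have h4 : X ^ (-(n : ℝ)/4) * X ^ (-(n : ℝ)/4) * X ^ ((n : ℝ)) = r ^ n := by
          rw [hr, ← Real.rpow_natCast (X ^ ((1:ℝ)/2)) n, ← Real.rpow_mul hX0.le,
            ← Real.rpow_add hX0, ← Real.rpow_add hX0]
          congr 1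
          ring
        rw [hK, pow_add, ← h4]
        ring

lemma Ccal_perm (X : ℝ) {A A' B B' : List ℂ} (hA : A.Perm A') (hB : B.Perm B') :
    Ccal X A B = Ccal X A' B' :=
  tsum_congr fun M => by rw [locCoeff_perm X hA, locCoeff_perm X hB]

lemma base_lemma (X : ℝ) (hX0 : 0 < X) (hX1 : X < 1) (A B : List ℂ) (α β : ℂ)
    (hA : ∀ a ∈ A, -(1/4 : ℝ) < a.re) (hB : ∀ b ∈ B, -(1/4 : ℝ) < b.re)
    (hα : α.re < 1/4) (hβ : β.re < 1/4) :
    (1 - cpowX X (1 - α - β)) * Ccal X ((-β) :: A) ((-α) :: B)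
      = Ccal X ((-β) :: A) B + Ccal X A ((-α) :: B) - Ccal X A B := by
  set Y : ℂ := cpowX X (1 - α - β) with hYdef
  have hA' : ∀ a ∈ (-β) :: A, -(1/4 : ℝ) < a.re := by
    intro a ha
    rcases List.mem_cons.1 ha with rfl | ha
    · simpa using hβ
    · exact hA a ha
  have hB' : ∀ b ∈ (-α) :: B, -(1/4 : ℝ) < b.re := by
    intro b hb
    rcases List.mem_cons.1 hb with rfl | hb
    · simpa using hα
    · exact hB b hb
  set f : ℕ → ℂ := fun M => locCoeff X ((-β) :: A) (M : ℤ) * locCoeff X ((-α) :: B) (M : ℤ)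
    * (X : ℂ) ^ M with hfdef
  set g : ℕ → ℂ := fun M => Nat.rec 0 (fun m _ => f m) M with hgdef
  have hg0 : g 0 = 0 := rfl
  have hgs : ∀ m, g (m + 1) = f m := fun m => rfl
  have hf : Summable f := summable_CcalTerm X hX0 hX1 _ _ hA' hB'
  have hg : Summable g := by
    apply (summable_nat_add_iff 1).1
    exact hf.congr fun m => (hgs m).symm
  have hgf : ∑' M, g M = ∑' M, f M := by
    rw [Summable.tsum_eq_zero_add hg, hg0, zero_add]
  have hY : Y = (X : ℂ) * cpowX X (-α) * cpowX X (-β) := by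
    rw [hYdef, show (1 : ℂ) - α - β = 1 + (-α) + (-β) by ring, cpowX_add, cpowX_add,
      cpowX_one X hX0]
  set t1 : ℕ → ℂ := fun M => locCoeff X ((-β) :: A) (M : ℤ) * locCoeff X B (M : ℤ)
    * (X : ℂ) ^ M with ht1def
  set t2 : ℕ → ℂ := fun M => locCoeff X A (M : ℤ) * locCoeff X ((-α) :: B) (M : ℤ)
    * (X : ℂ) ^ M with ht2def
  set t3 : ℕ → ℂ := fun M => locCoeff X A (M : ℤ) * locCoeff X B (M : ℤ)
    * (X : ℂ) ^ M with ht3def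
  have key : ∀ M, f M - Y * g M = t1 M + t2 M - t3 M := by
    intro M
    rcases M with _ | m
    · rw [hg0, mul_zero, sub_zero]
      simp only [hfdef, ht1def, ht2def, ht3def, Nat.cast_zero, locCoeff_zero, pow_zero]
      ring
    · rw [hgs m]
      have hcast : ((m + 1 : ℕ) : ℤ) - 1 = (m : ℤ) := by push_cast; ring
      have hP := locCoeff_rec X (-β) A (m + 1)
      have hQ := locCoeff_rec X (-α) B (m + 1)
      rw [hcast] at hP hQ
      have e1 : cpowX X (-β) * locCoeff X ((-β) :: A) (m : ℤ)
          = locCoeff X ((-β) :: A) ((m + 1 : ℕ) : ℤ) - locCoeff X A ((m + 1 : ℕ) : ℤ) := by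
        rw [hP]; ring
      have e2 : cpowX X (-α) * locCoeff X ((-α) :: B) (m : ℤ)
          = locCoeff X ((-α) :: B) ((m + 1 : ℕ) : ℤ) - locCoeff X B ((m + 1 : ℕ) : ℤ) := by
        rw [hQ]; ring
      simp only [hfdef, ht1def, ht2def, ht3def, hY]
      rw [hP, hQ]
      ring
  have ht1 : Summable t1 := summable_CcalTerm X hX0 hX1 _ _ hA' hB
  have ht2 : Summable t2 := summable_CcalTerm X hX0 hX1 _ _ hA hB'
  have ht3 : Summable t3 := summable_CcalTerm X hX0 hX1 _ _ hA hB
  have lhs : (1 - Y) * Ccal X ((-β) :: A) ((-α) :: B) = ∑' M, (f M - Y * g M) := by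
    rw [Summable.tsum_sub hf (hg.mul_left Y), tsum_mul_left, hgf]
    show (1 - Y) * (∑' M, f M) = _
    ring
  rw [lhs]
  have : ∑' M, (f M - Y * g M) = ∑' M, (t1 M + t2 M - t3 M) := tsum_congr key
  rw [this, Summable.tsum_sub (ht1.add ht2) ht3, Summable.tsum_add ht1 ht2]
  rfl

lemma listOk_append {A : List ℂ} {ι : Type*} (β : ι → ℂ) (hβ : ∀ j, (β j).re < 1/4)
    (hA : ∀ a ∈ A, -(1/4 : ℝ) < a.re) (L : List ι) :
    ∀ a ∈ A ++ L.map (fun j => -β j), -(1/4 : ℝ) < a.re := by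
  intro a ha
  rcases List.mem_append.1 ha with ha | ha
  · exact hA a ha
  · obtain ⟨j, _, rfl⟩ := List.mem_map.1 ha
    simpa using hβ j

lemma main_ind (X : ℝ) (hX0 : 0 < X) (hX1 : X < 1) {ι : Type*} [DecidableEq ι]
    (α β : ι → ℂ) (hα : ∀ j, (α j).re < 1/4) (hβ : ∀ j, (β j).re < 1/4)
    (s : Finset ι) :
    ∀ A B : List ℂ, (∀ a ∈ A, -(1/4 : ℝ) < a.re) → (∀ b ∈ B, -(1/4 : ℝ) < b.re) →
    (∏ j ∈ s, (1 - cpowX X (1 - α j - β j))) *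
      Ccal X (A ++ s.toList.map (fun j => -β j)) (B ++ s.toList.map (fun j => -α j))
    = ∑ J₁ ∈ s.powerset, ∑ J₂ ∈ s.powerset,
        (if Disjoint J₁ J₂ then
          (-1 : ℂ) ^ (s.card + J₁.card + J₂.card) *
            Ccal X (A ++ J₁.toList.map (fun j => -β j)) (B ++ J₂.toList.map (fun j => -α j))
        else 0) := by
  induction s using Finset.induction_on with
  | empty =>
    intro A B hA hB
    simp
  | @insert a s ha ih =>
    intro A B hA hB
    have hA₁ : ∀ x ∈ A ++ [-β a], -(1/4 : ℝ) < x.re := by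
      intro x hx
      rcases List.mem_append.1 hx with hx | hx
      · exact hA x hx
      · rw [List.mem_singleton] at hx
        subst hx
        simpa using hβ a
    have hB₁ : ∀ x ∈ B ++ [-α a], -(1/4 : ℝ) < x.re := by
      intro x hx
      rcases List.mem_append.1 hx with hx | hx
      · exact hB x hx
      · rw [List.mem_singleton] at hx
        subst hx
        simpa using hα a
    -- rewrite the LHS Ccal via permutation
    have permL : ((insert a s).toList.map (fun j => -β j)).Perm
        ((-β a) :: s.toList.map (fun j => -β j)) := (Finset.toList_insert ha).map _
    have permR : ((insert a s).toList.map (fun j => -α j)).Perm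
        ((-α a) :: s.toList.map (fun j => -α j)) := (Finset.toList_insert ha).map _
    have hC : Ccal X (A ++ (insert a s).toList.map (fun j => -β j))
        (B ++ (insert a s).toList.map (fun j => -α j))
        = Ccal X ((A ++ [-β a]) ++ s.toList.map (fun j => -β j))
          ((B ++ [-α a]) ++ s.toList.map (fun j => -α j)) := by
      apply Ccal_perm
      · exact (permL.append_left A).trans (by rw [← List.append_cons])
      · exact (permR.append_left B).trans (by rw [← List.append_cons])
    rw [Finset.prod_insert ha, hC, mul_assoc,
      ih (A ++ [-β a]) (B ++ [-α a]) hA₁ hB₁, Finset.mul_sum]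
    rw [Finset.sum_powerset_insert ha]
    have expand : ∀ F : Finset ι → ℂ, ∑ J₂ ∈ (insert a s).powerset, F J₂
        = ∑ J₂ ∈ s.powerset, F J₂ + ∑ J₂ ∈ s.powerset, F (insert a J₂) := fun F =>
      Finset.sum_powerset_insert ha F
    simp only [expand]
    rw [← Finset.sum_add_distrib]
    refine Finset.sum_congr rfl fun J₁ hJ₁ => ?_
    rw [Finset.mul_sum, ← Finset.sum_add_distrib, ← Finset.sum_add_distrib,
      ← Finset.sum_add_distrib]
    refine Finset.sum_congr rfl fun J₂ hJ₂ => ?_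
    have ha1 : a ∉ J₁ := fun h => ha (Finset.mem_powerset.1 hJ₁ h)
    have ha2 : a ∉ J₂ := fun h => ha (Finset.mem_powerset.1 hJ₂ h)
    simp only [Finset.disjoint_insert_right, Finset.disjoint_insert_left, ha1, ha2,
      not_false_eq_true, true_and, Finset.mem_insert, true_or, not_true_eq_false, false_and,
      if_false, add_zero, Finset.card_insert_of_notMem ha1, Finset.card_insert_of_notMem ha2,
      Finset.card_insert_of_notMem ha]
    by_cases hd : Disjoint J₁ J₂
    · simp only [if_pos hd]
      have hbase := base_lemma X hX0 hX1 (A ++ J₁.toList.map (fun j => -β j))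
        (B ++ J₂.toList.map (fun j => -α j)) (α a) (β a)
        (listOk_append β hβ hA J₁.toList) (listOk_append α hα hB J₂.toList)
        (hα a) (hβ a)
      have c0 : Ccal X ((-β a) :: (A ++ J₁.toList.map (fun j => -β j)))
            ((-α a) :: (B ++ J₂.toList.map (fun j => -α j)))
          = Ccal X (A ++ [-β a] ++ J₁.toList.map (fun j => -β j))
            (B ++ [-α a] ++ J₂.toList.map (fun j => -α j)) := by
        exact Ccal_perm X (List.perm_middle.symm.trans (by rw [← List.append_cons]))
          (List.perm_middle.symm.trans (by rw [← List.append_cons]))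
      have c1 : Ccal X ((-β a) :: (A ++ J₁.toList.map (fun j => -β j)))
            (B ++ J₂.toList.map (fun j => -α j))
          = Ccal X (A ++ (insert a J₁).toList.map (fun j => -β j))
            (B ++ J₂.toList.map (fun j => -α j)) := by
        exact Ccal_perm X (List.perm_middle.symm.trans
          (((Finset.toList_insert ha1).map (fun j => -β j)).append_left A).symm)
          (List.Perm.refl _)
      have c2 : Ccal X (A ++ J₁.toList.map (fun j => -β j))
            ((-α a) :: (B ++ J₂.toList.map (fun j => -α j)))
          = Ccal X (A ++ J₁.toList.map (fun j => -β j))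
            (B ++ (insert a J₂).toList.map (fun j => -α j)) := by
        exact Ccal_perm X (List.Perm.refl _) (List.perm_middle.symm.trans
          (((Finset.toList_insert ha2).map (fun j => -α j)).append_left B).symm)
      rw [c0, c1, c2] at hbase
      have s1 : (-1 : ℂ) ^ (s.card + 1 + J₁.card + J₂.card)
          = -(-1 : ℂ) ^ (s.card + J₁.card + J₂.card) := by
        rw [show s.card + 1 + J₁.card + J₂.card = (s.card + J₁.card + J₂.card) + 1 by ring,
          pow_succ]
        ring
      have s2 : (-1 : ℂ) ^ (s.card + 1 + J₁.card + (J₂.card + 1))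
          = (-1 : ℂ) ^ (s.card + J₁.card + J₂.card) := by
        rw [show s.card + 1 + J₁.card + (J₂.card + 1) = (s.card + J₁.card + J₂.card) + 2
          by ring, pow_add]
        norm_num
      have s3 : (-1 : ℂ) ^ (s.card + 1 + (J₁.card + 1) + J₂.card)
          = (-1 : ℂ) ^ (s.card + J₁.card + J₂.card) := by
        rw [show s.card + 1 + (J₁.card + 1) + J₂.card = (s.card + J₁.card + J₂.card) + 2
          by ring, pow_add]
        norm_num
      rw [s1, s2, s3]
      linear_combination ((-1 : ℂ) ^ (s.card + J₁.card + J₂.card)) * hbase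
    · simp [hd]

/-- Lemma 3 of the paper: the inclusion–exclusion expansion
`∏_j (1-X^{1-α_j-β_j}) C(A∪{-β₁,…,-β_ℓ}, B∪{-α₁,…,-α_ℓ})
 = (-1)^ℓ Σ_{J₁,J₂⊆{1,…,ℓ}, J₁∩J₂=∅} (-1)^{|J₁|+|J₂|} C(A∪-β_{J₁}, B∪-α_{J₂})`. -/
theorem stmt10 (ℓ : ℕ) (hℓ : 1 ≤ ℓ) (A B : List ℂ) (α β : Fin ℓ → ℂ)
    (hA : ∀ a ∈ A, -(1/4 : ℝ) < a.re ∧ a.re < 1/4)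
    (hB : ∀ b ∈ B, -(1/4 : ℝ) < b.re ∧ b.re < 1/4)
    (hα : ∀ j, -(1/4 : ℝ) < (α j).re ∧ (α j).re < 1/4)
    (hβ : ∀ j, -(1/4 : ℝ) < (β j).re ∧ (β j).re < 1/4)
    (X : ℝ) (hX0 : 0 < X) (hX1 : X < 1) :
    (∏ j, (1 - cpowX X (1 - α j - β j))) *
      Ccal X (A ++ List.ofFn (fun j => -β j)) (B ++ List.ofFn (fun j => -α j))
    = (-1 : ℂ) ^ ℓ * ∑ J₁ : Finset (Fin ℓ), ∑ J₂ : Finset (Fin ℓ),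
        if Disjoint J₁ J₂ then
          (-1 : ℂ) ^ (J₁.card + J₂.card) *
            Ccal X (A ++ J₁.toList.map (fun j => -β j)) (B ++ J₂.toList.map (fun j => -α j))
        else 0 := by
  have hα' : ∀ j, (α j).re < 1/4 := fun j => (hα j).2
  have hβ' : ∀ j, (β j).re < 1/4 := fun j => (hβ j).2
  have hA' : ∀ a ∈ A, -(1/4 : ℝ) < a.re := fun a h => (hA a h).1
  have hB' : ∀ b ∈ B, -(1/4 : ℝ) < b.re := fun b h => (hB b h).1
  have hperm : (Finset.univ.toList : List (Fin ℓ)).Perm (List.finRange ℓ) :=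
    List.perm_of_nodup_nodup_toFinset_eq (Finset.nodup_toList _) (List.nodup_finRange ℓ)
      (by ext x; simp)
  have key := main_ind X hX0 hX1 α β hα' hβ' Finset.univ A B hA' hB'
  have hL : Ccal X (A ++ Finset.univ.toList.map (fun j => -β j))
      (B ++ Finset.univ.toList.map (fun j => -α j))
      = Ccal X (A ++ List.ofFn (fun j => -β j)) (B ++ List.ofFn (fun j => -α j)) := by
    rw [List.ofFn_eq_map, List.ofFn_eq_map]
    exact Ccal_perm X ((hperm.map _).append_left A) ((hperm.map _).append_left B)
  rw [hL] at key
  rw [key, Finset.powerset_univ, Finset.mul_sum]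
  refine Finset.sum_congr rfl fun J₁ _ => ?_
  rw [Finset.mul_sum]
  refine Finset.sum_congr rfl fun J₂ _ => ?_
  rw [Finset.card_univ, Fintype.card_fin]
  split_ifs with h
  · rw [show ℓ + J₁.card + J₂.card = ℓ + (J₁.card + J₂.card) by ring, pow_add, mul_assoc]
  · rw [mul_zero]
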